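/- Let V be a vector space over K (K = ℚ or ℝ) and V′ a K-subspace. Then the subspace topology on V′ induced by the strong topology on V coincides with the strong topology of V′ itself. -/

import Mathlib

/-- `U` is open in the strong topology on `V`: its preimage under every linear map
from a finite-dimensional coordinate space `K^n` is open. -/
def StrongOpen (K : Type*) [Field K] [LinearOrder K] [IsStrictOrderedRing K] [TopologicalSpace K]
    {V : Type*} [AddCommGroup V] [Module K V] (U : Set V) : Prop :=
  ∀ (n : ℕ) (φ : (Fin n → K) →ₗ[K] V), IsOpen (φ ⁻¹' U)

/-- The induced topology on a subspace `V'` from the strong topology of `V`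
coincides with the strong topology of `V'`: they have the same open sets. -/
theorem strong_topology_subspace (K : Type*) [Field K] [LinearOrder K] [IsStrictOrderedRing K] [TopologicalSpace K]
    [OrderTopology K] {V : Type*} [AddCommGroup V] [Module K V] (V' : Submodule K V)
    (U' : Set V') :
    StrongOpen K U' ↔ ∃ U : Set V, StrongOpen K U ∧ U' = ((↑) : V' → V) ⁻¹' U := by
  constructor
  · intro h
    obtain ⟨q, hq⟩ := Submodule.exists_isCompl V'
    let π : V →ₗ[K] V' := Submodule.projectionOnto V' q hq
    refine ⟨π ⁻¹' U', ?_, ?_⟩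
    · intro n φ
      have := h n (π.comp φ)
      exact this
    · ext x
      simp [π, Submodule.linearProjOfIsCompl_apply_left hq x]
  · rintro ⟨U, hU, rfl⟩
    intro n φ
    have := hU n (V'.subtype.comp φ)
    exact this
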